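/- Let H be a complex Hilbert space and A, B ∈ B(H) with A∘B ≠ 0 and A∘B = λ • (B∘A) for some λ ∈ ℂ. If both A and B are self-adjoint and at least one of them is positive, then λ = 1, i.e. A∘B = B∘A. -/

import Mathlib

open ContinuousLinearMap in
/-- Auxiliary: the case where `A` is positive, phrased with ring multiplication. -/
private lemma comm_aux
    {H : Type*} [NormedAddCommGroup H] [InnerProductSpace ℂ H] [CompleteSpace H]
    (A B : H →L[ℂ] H) (lam : ℂ)
    (hne : A * B ≠ 0) (hcomm : A * B = lam • (B * A))
    (hA : IsSelfAdjoint A) (hB : IsSelfAdjoint B)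
    (hApos : A.IsPositive) : lam = 1 := by
  -- adjoint of the commutation relation
  have h2 : B * A = (starRingEnd ℂ lam) • (A * B) := by
    have := congrArg star hcomm
    simpa [star_mul, hA.star_eq, hB.star_eq, star_smul] using this
  -- |lam|² = 1
  have hmod : lam * (starRingEnd ℂ) lam = 1 := by
    have h3 : A * B = (lam * (starRingEnd ℂ) lam) • (A * B) := by
      conv_lhs => rw [hcomm, h2, smul_smul]
    by_contra hne1
    have : (lam * (starRingEnd ℂ) lam - 1) • (A * B) = 0 := by
      rw [sub_smul, one_smul, ← h3, sub_self]
    rcases smul_eq_zero.mp this with h | h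
    · exact hne1 (by linear_combination h)
    · exact hne h
  -- a square root μ of lam
  obtain ⟨μ, hμ⟩ := IsAlgClosed.exists_pow_nat_eq lam zero_lt_two
  have hμconj : μ * (starRingEnd ℂ) μ = 1 := by
    have hsq : (Complex.normSq μ : ℂ) ^ 2 = 1 := by
      rw [← Complex.mul_conj μ]
      calc (μ * (starRingEnd ℂ) μ) ^ 2 = μ ^ 2 * (starRingEnd ℂ) (μ ^ 2) := by
            rw [mul_pow, map_pow]
        _ = 1 := by rw [hμ]; exact hmod
    have hsqR : (Complex.normSq μ) ^ 2 = 1 := by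
      exact_mod_cast hsq
    have hnn : 0 ≤ Complex.normSq μ := Complex.normSq_nonneg μ
    have : Complex.normSq μ = 1 := by nlinarith
    rw [Complex.mul_conj, this, Complex.ofReal_one]
  have hμ0 : μ ≠ 0 := by
    rintro rfl
    simp at hμconj
  have hμinv : (starRingEnd ℂ) μ = μ⁻¹ := by
    field_simp [hμ0]
    linear_combination hμconj
  -- S = μ⁻¹ • (A*B) is self-adjoint and nonzero
  set S : H →L[ℂ] H := μ⁻¹ • (A * B) with hSdef
  have hSsa : IsSelfAdjoint S := by
    have hst : star S = ((starRingEnd ℂ) μ⁻¹ * (starRingEnd ℂ) lam) • (A * B) := by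
      rw [hSdef, star_smul, star_mul, hA.star_eq, hB.star_eq, h2, smul_smul]
      rfl
    rw [IsSelfAdjoint, hst, hSdef]
    congr 1
    rw [map_inv₀, hμinv, ← hμ, map_pow, hμinv]
    field_simp
  have hS0 : S ≠ 0 := smul_ne_zero (inv_ne_zero hμ0) hne
  haveI : Nontrivial (H →L[ℂ] H) := nontrivial_of_ne (A * B) 0 hne
  -- a nonzero real point of the spectrum of S
  obtain ⟨a, ha_mem, ha_norm⟩ := spectrum.exists_nnnorm_eq_spectralRadius (a := S)
  have ha0 : a ≠ 0 := by
    intro h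
    rw [h, hSsa.spectralRadius_eq_nnnorm] at ha_norm
    have hz : ‖S‖₊ = 0 := by exact_mod_cast ha_norm.symm
    exact hS0 (by simpa using hz)
  have ha_real : a = (a.re : ℂ) := hSsa.mem_spectrum_eq_re ha_mem
  -- μ * a belongs to the spectrum of A * B
  have hAB : A * B = (Units.mk0 μ hμ0) • S := by
    rw [hSdef, Units.smul_def, Units.val_mk0, smul_smul]
    field_simp
    rw [one_smul]
  have hμa_mem : μ * a ∈ spectrum ℂ (A * B) := by
    rw [hAB, spectrum.unit_smul_eq_smul]
    exact ⟨a, ha_mem, rfl⟩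
  -- move to the self-adjoint operator √A * B * √A
  have hAnn : (0 : H →L[ℂ] H) ≤ A := (ContinuousLinearMap.nonneg_iff_isPositive A).mpr hApos
  set R : H →L[ℂ] H := CFC.sqrt A with hRdef
  have hRR : R * R = A := CFC.sqrt_mul_sqrt_self A hAnn
  have hRsa : IsSelfAdjoint R := IsSelfAdjoint.of_nonneg (CFC.sqrt_nonneg A)
  have hμa0 : μ * a ≠ 0 := mul_ne_zero hμ0 ha0
  have hswap : μ * a ∈ spectrum ℂ (R * B * R) := by
    have h1 : μ * a ∈ spectrum ℂ (R * (R * B)) \ {0} := by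
      constructor
      · rw [← mul_assoc, hRR]; exact hμa_mem
      · simpa using hμa0
    have := spectrum.nonzero_mul_comm (𝕜 := ℂ) R (R * B)
    rw [this] at h1
    simpa [mul_assoc] using h1.1
  have hTsa : IsSelfAdjoint (R * B * R) := by
    rw [IsSelfAdjoint, star_mul, star_mul, hRsa.star_eq, hB.star_eq]
    noncomm_ring
  have hμa_real : μ * a = ((μ * a).re : ℂ) := hTsa.mem_spectrum_eq_re hswap
  -- conclude μ is real, hence lam = μ * conj μ = 1
  have haim : a.im = 0 := by rw [ha_real]; simp
  have hμaim : (μ * a).im = 0 := by rw [hμa_real]; simp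
  have hare : a.re ≠ 0 := by
    intro h
    apply ha0
    rw [ha_real, h]
    simp
  have hμim : μ.im = 0 := by
    rw [Complex.mul_im, haim, mul_zero, zero_add] at hμaim
    exact (mul_eq_zero.mp hμaim).resolve_right hare
  have hμ_real : (starRingEnd ℂ) μ = μ := Complex.conj_eq_iff_im.mpr hμim
  calc lam = μ ^ 2 := hμ.symm
    _ = μ * ((starRingEnd ℂ) μ) := by rw [hμ_real]; ring
    _ = 1 := hμconj

/-- Brooke et al., part 3. If `A∘B ≠ 0`, `A∘B = λ • (B∘A)`,
both `A` and `B` are self-adjoint and at least one of them is positive, then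
`λ = 1`, i.e. `A∘B = B∘A`. -/
theorem comm_conditions_selfAdjoint_positive
    {H : Type*} [NormedAddCommGroup H] [InnerProductSpace ℂ H] [CompleteSpace H]
    (A B : H →L[ℂ] H) (lam : ℂ)
    (hne : A ∘L B ≠ 0) (hcomm : A ∘L B = lam • (B ∘L A))
    (hA : IsSelfAdjoint A) (hB : IsSelfAdjoint B)
    (hpos : A.IsPositive ∨ B.IsPositive) :
    lam = 1 ∧ A ∘L B = B ∘L A := by
  have hne' : A * B ≠ 0 := hne
  have hcomm' : A * B = lam • (B * A) := hcomm
  have hlam : lam = 1 := by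
    rcases hpos with hApos | hBpos
    · exact comm_aux A B lam hne' hcomm' hA hB hApos
    · -- adjoint relation: B * A = conj lam • (A * B)
      have h2 : B * A = (starRingEnd ℂ lam) • (A * B) := by
        have := congrArg star hcomm'
        simpa [star_mul, hA.star_eq, hB.star_eq, star_smul] using this
      have hBA0 : B * A ≠ 0 := by
        intro h
        rw [h, smul_zero] at hcomm'
        exact hne' hcomm'
      have := comm_aux B A ((starRingEnd ℂ) lam) hBA0 h2 hB hA hBpos
      have : (starRingEnd ℂ) ((starRingEnd ℂ) lam) = (starRingEnd ℂ) 1 := by rw [this]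
      simpa using this
  refine ⟨hlam, ?_⟩
  rw [hcomm, hlam, one_smul]
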